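/- Let D = (E, F) be a delta-matroid and e ∈ E with dual type t (every maximum feasible set contains e and some feasible set of size r(D_max)−1 omits e). Then r((D^{×|e})_max) = r(D_max) − 1 and e has dual type p in D^{×|e} (some maximum feasible set of D^{×|e} omits e). -/
import Mathlib


open Finset Polynomial

variable {α : Type*} [DecidableEq α]

/-- The twist of a collection of feasible sets with respect to `A`. -/
noncomputable def SS.twist (A : Finset α) (F : Finset (Finset α)) : Finset (Finset α) :=
  F.image (fun X => symmDiff A X)

/-- Loop complementation at a single element `e`. -/
noncomputable def SS.lc (e : α) (F : Finset (Finset α)) : Finset (Finset α) :=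
  symmDiff F ((F.filter (fun X => e ∉ X)).image (insert e))

/-- The two generating operations: twist `*` and loop complementation `×`. -/
inductive SS.Op | star | cross

/-- Apply a single operation at a single element. -/
noncomputable def SS.opElem : SS.Op → α → Finset (Finset α) → Finset (Finset α)
  | .star, e, F => SS.twist {e} F
  | .cross, e, F => SS.lc e F

/-- Apply a word in `{*, ×}` at a single element. -/
noncomputable def SS.wordElem (w : List SS.Op) (e : α) (F : Finset (Finset α)) : Finset (Finset α) :=
  w.foldl (fun F o => SS.opElem o e F) F

/-- Apply a word in `{*, ×}` elementwise on a subset `A`. -/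
noncomputable def SS.wordOn (w : List SS.Op) (A : Finset α) (F : Finset (Finset α)) : Finset (Finset α) :=
  A.toList.foldl (fun F e => SS.wordElem w e F) F

/-- Size of a largest feasible set. -/
noncomputable def SS.rmax (F : Finset (Finset α)) : ℕ := F.sup Finset.card

/-- Size of a smallest feasible set. -/
noncomputable def SS.rmin (F : Finset (Finset α)) : ℕ := sInf (Finset.card '' (F : Set (Finset α)))

/-- The width of a set system. -/
noncomputable def SS.width (F : Finset (Finset α)) : ℕ := SS.rmax F - SS.rmin F

/-- The minimum-cardinality feasible sets. -/
noncomputable def SS.Fmin (F : Finset (Finset α)) : Finset (Finset α) :=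
  F.filter (fun X => X.card = SS.rmin F)

/-- The maximum-cardinality feasible sets. -/
noncomputable def SS.Fmax (F : Finset (Finset α)) : Finset (Finset α) :=
  F.filter (fun X => X.card = SS.rmax F)

/-- The partial-`w` polynomial of a set system with ground set `E`. -/
noncomputable def SS.poly (w : List SS.Op) (E : Finset α) (F : Finset (Finset α)) :
    Polynomial ℤ :=
  ∑ A ∈ E.powerset, (Polynomial.X : Polynomial ℤ) ^ SS.width (SS.wordOn w A F)

/-- A proper set system satisfying the symmetric exchange axiom. -/
noncomputable def SS.IsDeltaMatroid (F : Finset (Finset α)) : Prop :=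
  F.Nonempty ∧ ∀ X ∈ F, ∀ Y ∈ F, ∀ u ∈ symmDiff X Y,
    ∃ v ∈ symmDiff X Y, symmDiff X {u, v} ∈ F

/-- Apply a sequence of single-element twists and loop complementations. -/
noncomputable def SS.seqApply : List (SS.Op × α) → Finset (Finset α) → Finset (Finset α)
  | [], F => F
  | (o, e) :: s, F => SS.seqApply s (SS.opElem o e F)

/-- A set system is vf-safe if every sequence of single-element twists and loop
complementations yields a delta-matroid. -/
noncomputable def SS.VfSafe (F : Finset (Finset α)) : Prop :=
  ∀ s : List (SS.Op × α), SS.IsDeltaMatroid (SS.seqApply s F)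

/-- The direct sum of two set systems. -/
noncomputable def SS.dsum (F F' : Finset (Finset α)) : Finset (Finset α) :=
  (F ×ˢ F').image (fun p => p.1 ∪ p.2)

open SS

lemma sd_single (B : Finset α) (u : α) (hu : u ∉ B) : symmDiff B {u} = insert u B := by
  ext a
  simp only [Finset.mem_symmDiff, Finset.mem_insert, Finset.mem_singleton]
  by_cases h : a = u <;> simp_all

lemma sd_pair_out (B : Finset α) (u v : α) (hu : u ∉ B) (hv : v ∉ B) (huv : u ≠ v) :
    symmDiff B {u, v} = insert u (insert v B) := by
  ext a
  simp only [Finset.mem_symmDiff, Finset.mem_insert, Finset.mem_singleton]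
  by_cases h1 : a = u <;> by_cases h2 : a = v <;> simp_all

lemma sd_pair_mix (B : Finset α) (u v : α) (hu : u ∉ B) (hv : v ∈ B) (huv : u ≠ v) :
    symmDiff B {u, v} = insert u (B.erase v) := by
  ext a
  simp only [Finset.mem_symmDiff, Finset.mem_insert, Finset.mem_singleton, Finset.mem_erase]
  by_cases h1 : a = u <;> by_cases h2 : a = v <;> simp_all

lemma sd_reduce (X B : Finset α) (u w : α) (hu1 : u ∈ X) (hu2 : u ∉ B)
    (hw1 : w ∉ X) (hw2 : w ∈ B) (huw : u ≠ w) :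
    symmDiff X (insert u (B.erase w)) = ((symmDiff X B).erase u).erase w := by
  ext a
  simp only [Finset.mem_symmDiff, Finset.mem_insert, Finset.mem_erase]
  by_cases h1 : a = u <;> by_cases h2 : a = w <;> simp_all

section keylemmas
variable (F : Finset (Finset α)) (hD : SS.IsDeltaMatroid F) (e : α)
  (ht1 : ∀ A ∈ SS.Fmax F, e ∈ A)

include hD ht1 in
lemma lemA : ∀ (n : ℕ) (X B : Finset α), (symmDiff X B).card ≤ n → X ∈ F →
    X.card = SS.rmax F → B ∈ F → B.card + 1 = SS.rmax F → e ∉ B → X.erase e ∈ F := by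
  intro n
  induction n with
  | zero =>
    intro X B hn hX hXr hB hBr heB
    have heX : e ∈ X := ht1 X (Finset.mem_filter.mpr ⟨hX, hXr⟩)
    have : e ∈ symmDiff X B := Finset.mem_symmDiff.mpr (Or.inl ⟨heX, heB⟩)
    have := Finset.card_pos.mpr ⟨e, this⟩
    omega
  | succ n ih =>
    intro X B hn hX hXr hB hBr heB
    have heX : e ∈ X := ht1 X (Finset.mem_filter.mpr ⟨hX, hXr⟩)
    by_cases hex : ∃ u ∈ X, u ∉ B ∧ u ≠ e
    · obtain ⟨u, hu1, hu2, hue⟩ := hex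
      have humem : u ∈ symmDiff B X := Finset.mem_symmDiff.mpr (Or.inr ⟨hu1, hu2⟩)
      obtain ⟨v, hv, hW⟩ := hD.2 B hB X hX u humem
      by_cases hvu : v = u
      · subst hvu
        rw [show ({v, v} : Finset α) = {v} by simp, sd_single B v hu2] at hW
        have hcard : (insert v B).card = SS.rmax F := by
          rw [Finset.card_insert_of_notMem hu2]; omega
        have := ht1 _ (Finset.mem_filter.mpr ⟨hW, hcard⟩)
        rcases Finset.mem_insert.mp this with h | h
        · exact absurd h.symm hue
        · exact absurd h heB
      · rcases Finset.mem_symmDiff.mp hv with ⟨hv1, hv2⟩ | ⟨hv1, hv2⟩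
        · -- v ∈ B \ X : reduction
          have huv : u ≠ v := fun h => hvu h.symm
          rw [sd_pair_mix B u v hu2 hv1 huv] at hW
          have hvX : v ∉ X := hv2
          have hcardB2 : (insert u (B.erase v)).card = B.card := by
            rw [Finset.card_insert_of_notMem (fun h => hu2 (Finset.mem_of_mem_erase h)),
              Finset.card_erase_of_mem hv1]
            have := Finset.card_pos.mpr ⟨v, hv1⟩
            omega
          have heB2 : e ∉ insert u (B.erase v) := by
            simp only [Finset.mem_insert, Finset.mem_erase]
            push_neg
            exact ⟨fun h => hue h.symm, fun _ => heB⟩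
          have hsd : symmDiff X (insert u (B.erase v)) = ((symmDiff X B).erase u).erase v :=
            sd_reduce X B u v hu1 hu2 hvX hv1 huv
          have humem' : u ∈ symmDiff X B := Finset.mem_symmDiff.mpr (Or.inl ⟨hu1, hu2⟩)
          have hle : (symmDiff X (insert u (B.erase v))).card ≤ n := by
            rw [hsd]
            have h1 := Finset.card_erase_le (s := (symmDiff X B).erase u) (a := v)
            have h2 := Finset.card_erase_of_mem humem'
            have := Finset.card_pos.mpr ⟨u, humem'⟩
            omega
          exact ih X (insert u (B.erase v)) hle hX hXr hW (by omega) heB2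
        · -- v ∈ X \ B : size contradiction
          have huv : u ≠ v := fun h => hvu h.symm
          rw [sd_pair_out B u v hu2 hv2 huv] at hW
          have hle := Finset.le_sup (f := Finset.card) hW
          have hvB2 : v ∉ B := hv2
          rw [Finset.card_insert_of_notMem (by simp [huv, hu2]),
            Finset.card_insert_of_notMem hvB2] at hle
          change _ ≤ SS.rmax F at hle
          omega
    · push_neg at hex
      have hsub : X ⊆ insert e B := by
        intro a ha
        rcases eq_or_ne a e with h | h
        · simp [h]
        · by_cases hb : a ∈ B
          · exact Finset.mem_insert_of_mem hb
          · exact absurd h (by simpa using hex a ha hb)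
      have hXeq : X = insert e B := Finset.eq_of_subset_of_card_le hsub (by
        rw [Finset.card_insert_of_notMem heB]; omega)
      rw [hXeq, Finset.erase_insert heB]
      exact hB

include hD ht1 in
lemma lemB : ∀ (n : ℕ) (B M : Finset α), (symmDiff B M).card ≤ n → B ∈ F →
    B.card + 1 = SS.rmax F → e ∉ B → M ∈ F → M.card = SS.rmax F → insert e B ∈ F := by
  intro n
  induction n with
  | zero =>
    intro B M hn hB hBr heB hM hMr
    have heM : e ∈ M := ht1 M (Finset.mem_filter.mpr ⟨hM, hMr⟩)
    have : e ∈ symmDiff B M := Finset.mem_symmDiff.mpr (Or.inr ⟨heM, heB⟩)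
    have := Finset.card_pos.mpr ⟨e, this⟩
    omega
  | succ n ih =>
    intro B M hn hB hBr heB hM hMr
    have heM : e ∈ M := ht1 M (Finset.mem_filter.mpr ⟨hM, hMr⟩)
    by_cases hex : ∃ u ∈ M, u ∉ B ∧ u ≠ e
    · obtain ⟨u, hu1, hu2, hue⟩ := hex
      have humem : u ∈ symmDiff B M := Finset.mem_symmDiff.mpr (Or.inr ⟨hu1, hu2⟩)
      obtain ⟨w, hw, hW⟩ := hD.2 B hB M hM u humem
      by_cases hwu : w = u
      · subst hwu
        rw [show ({w, w} : Finset α) = {w} by simp, sd_single B w hu2] at hW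
        have hcard : (insert w B).card = SS.rmax F := by
          rw [Finset.card_insert_of_notMem hu2]; omega
        have := ht1 _ (Finset.mem_filter.mpr ⟨hW, hcard⟩)
        rcases Finset.mem_insert.mp this with h | h
        · exact absurd h.symm hue
        · exact absurd h heB
      · rcases Finset.mem_symmDiff.mp hw with ⟨hw1, hw2⟩ | ⟨hw1, hw2⟩
        · -- w ∈ B \ M : reduction then the final exchange
          have huw : u ≠ w := fun h => hwu h.symm
          rw [sd_pair_mix B u w hu2 hw1 huw] at hW
          set B2 := insert u (B.erase w) with hB2def
          have hwe : w ≠ e := fun h => heB (h ▸ hw1)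
          have hcardB2 : B2.card = B.card := by
            rw [hB2def, Finset.card_insert_of_notMem (fun h => hu2 (Finset.mem_of_mem_erase h)),
              Finset.card_erase_of_mem hw1]
            have := Finset.card_pos.mpr ⟨w, hw1⟩
            omega
          have heB2 : e ∉ B2 := by
            simp only [hB2def, Finset.mem_insert, Finset.mem_erase]
            push_neg
            exact ⟨fun h => hue h.symm, fun _ => heB⟩
          have hsd : symmDiff M B2 = ((symmDiff M B).erase u).erase w :=
            sd_reduce M B u w hu1 hu2 hw2 hw1 huw
          have humem' : u ∈ symmDiff M B := Finset.mem_symmDiff.mpr (Or.inl ⟨hu1, hu2⟩)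
          have hle : (symmDiff B2 M).card ≤ n := by
            rw [symmDiff_comm, hsd]
            have h1 := Finset.card_erase_le (s := (symmDiff M B).erase u) (a := w)
            have h2 := Finset.card_erase_of_mem humem'
            have := Finset.card_pos.mpr ⟨u, humem'⟩
            rw [symmDiff_comm B M] at hn
            omega
          have hM2 : insert e B2 ∈ F := ih B2 M hle hW (by omega) heB2 hM hMr
          set M2 := insert e B2 with hM2def
          have hcardM2 : M2.card = SS.rmax F := by
            rw [hM2def, Finset.card_insert_of_notMem heB2]; omega
          have hwM2 : w ∉ M2 := by
            simp only [hM2def, hB2def, Finset.mem_insert, Finset.mem_erase]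
            push_neg
            exact ⟨hwe, huw.symm, fun h _ => h rfl⟩
          have hwmem : w ∈ symmDiff M2 B := Finset.mem_symmDiff.mpr (Or.inr ⟨hw1, hwM2⟩)
          obtain ⟨w', hw', hW'⟩ := hD.2 M2 hM2 B hB w hwmem
          by_cases hww : w' = w
          · subst hww
            rw [show ({w', w'} : Finset α) = {w'} by simp, sd_single M2 w' hwM2] at hW'
            have hle' := Finset.le_sup (f := Finset.card) hW'
            rw [Finset.card_insert_of_notMem hwM2] at hle'
            change _ ≤ SS.rmax F at hle'
            omega
          · have hww' : w ≠ w' := fun h => hww h.symm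
            -- w' ∈ M2 \ B, and w' = e or w' = u
            have hw'cases : w' = e ∨ w' = u := by
              rcases Finset.mem_symmDiff.mp hw' with ⟨hw'1, hw'2⟩ | ⟨hw'1, hw'2⟩
              · rcases Finset.mem_insert.mp hw'1 with h | h
                · exact Or.inl h
                · rcases Finset.mem_insert.mp h with h' | h'
                  · exact Or.inr h'
                  · exact absurd (Finset.mem_of_mem_erase h') hw'2
              · exfalso
                apply hww
                by_contra hne
                apply hw'2
                simp only [hM2def, hB2def, Finset.mem_insert, Finset.mem_erase]
                right; right
                exact ⟨hne, hw'1⟩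
            rcases hw'cases with h | h
            · -- w' = e : contradiction via ht1
              subst h
              have heM2 : w' ∈ M2 := Finset.mem_insert_self w' B2
              rw [sd_pair_mix M2 w w' hwM2 heM2 hww'] at hW'
              have hM2erase : M2.erase w' = B2 := Finset.erase_insert heB2
              rw [hM2erase] at hW'
              have hwB2 : w ∉ B2 := by
                simp only [hB2def, Finset.mem_insert, Finset.mem_erase]
                push_neg
                exact ⟨huw.symm, fun h _ => h rfl⟩
              have hcard' : (insert w B2).card = SS.rmax F := by
                rw [Finset.card_insert_of_notMem hwB2]; omega
              have := ht1 _ (Finset.mem_filter.mpr ⟨hW', hcard'⟩)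
              rcases Finset.mem_insert.mp this with h | h
              · exact absurd h hwe.symm
              · exact absurd h heB2
            · -- w' = u : win
              subst h
              have huM2 : w' ∈ M2 := by
                simp [hM2def, hB2def]
              rw [sd_pair_mix M2 w w' hwM2 huM2 hww'] at hW'
              have key : insert w (M2.erase w') = insert e B := by
                ext a
                simp only [hM2def, hB2def, Finset.mem_insert, Finset.mem_erase]
                constructor
                · rintro (h | ⟨h1, (h2 | h2 | h2)⟩)
                  · subst h; right; exact hw1
                  · exact Or.inl h2
                  · exact absurd h2 h1
                  · right; exact h2.2
                · rintro (h | h)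
                  · subst h; right; exact ⟨hue.symm, Or.inl rfl⟩
                  · by_cases haw : a = w
                    · exact Or.inl haw
                    · right
                      refine ⟨fun hh => hu2 (hh ▸ h), Or.inr (Or.inr ⟨haw, h⟩)⟩
              rw [key] at hW'
              exact hW'
        · -- w ∈ M \ B, w ≠ u : size contradiction
          have huw : u ≠ w := fun h => hwu h.symm
          rw [sd_pair_out B u w hu2 hw2 huw] at hW
          have hle := Finset.le_sup (f := Finset.card) hW
          rw [Finset.card_insert_of_notMem (by simp [huw, hu2]),
            Finset.card_insert_of_notMem hw2] at hle
          change _ ≤ SS.rmax F at hle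
          omega
    · push_neg at hex
      have hsub : M ⊆ insert e B := by
        intro a ha
        rcases eq_or_ne a e with h | h
        · simp [h]
        · by_cases hb : a ∈ B
          · exact Finset.mem_insert_of_mem hb
          · exact absurd h (by simpa using hex a ha hb)
      have hMeq : M = insert e B := Finset.eq_of_subset_of_card_le hsub (by
        rw [Finset.card_insert_of_notMem heB]; omega)
      rw [← hMeq]
      exact hM

end keylemmas


theorem stmt14 (F : Finset (Finset α)) (hD : SS.IsDeltaMatroid F) (e : α)
    (ht1 : ∀ A ∈ SS.Fmax F, e ∈ A)
    (ht2 : ∃ B ∈ F, B.card + 1 = SS.rmax F ∧ e ∉ B) :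
    SS.rmax (SS.lc e F) + 1 = SS.rmax F ∧
    ∃ B ∈ SS.Fmax (SS.lc e F), e ∉ B := by
  obtain ⟨B0, hB0, hB0c, heB0⟩ := ht2
  have hB0img : B0 ∉ (F.filter (fun X => e ∉ X)).image (insert e) := by
    intro h
    obtain ⟨Y, hY, hYe⟩ := Finset.mem_image.mp h
    apply heB0
    rw [← hYe]
    exact Finset.mem_insert_self _ _
  have hB0lc : B0 ∈ SS.lc e F := by
    unfold SS.lc
    exact Finset.mem_symmDiff.mpr (Or.inl ⟨hB0, hB0img⟩)
  have hub : ∀ X ∈ SS.lc e F, X.card ≤ SS.rmax F - 1 := by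
    intro X hX
    unfold SS.lc at hX
    rcases Finset.mem_symmDiff.mp hX with ⟨hXF, hXimg⟩ | ⟨hXimg, hXF⟩
    · have hle : X.card ≤ SS.rmax F := Finset.le_sup hXF
      rcases eq_or_lt_of_le hle with hc | hc
      · exfalso
        have heX : e ∈ X := ht1 X (Finset.mem_filter.mpr ⟨hXF, hc⟩)
        have herase : X.erase e ∈ F :=
          lemA F hD e ht1 (symmDiff X B0).card X B0 le_rfl hXF hc hB0 hB0c heB0
        apply hXimg
        apply Finset.mem_image.mpr
        exact ⟨X.erase e, Finset.mem_filter.mpr ⟨herase, by simp⟩, Finset.insert_erase heX⟩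
      · omega
    · obtain ⟨Y, hYf, hYe⟩ := Finset.mem_image.mp hXimg
      obtain ⟨hYF, heY⟩ := Finset.mem_filter.mp hYf
      have hYle : Y.card ≤ SS.rmax F := Finset.le_sup hYF
      have hYne : Y.card ≠ SS.rmax F := by
        intro hc
        exact heY (ht1 Y (Finset.mem_filter.mpr ⟨hYF, hc⟩))
      have hXc : X.card = Y.card + 1 := by
        rw [← hYe, Finset.card_insert_of_notMem heY]
      rcases eq_or_lt_of_le (show X.card ≤ SS.rmax F by omega) with hc | hc
      · exfalso
        apply hXF
        rw [← hYe]
        have hM0 : SS.rmax F ≤ SS.rmax F := le_rfl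
        obtain ⟨M, hM, hMc⟩ := Finset.exists_mem_eq_sup F hD.1 Finset.card
        exact lemB F hD e ht1 (symmDiff Y M).card Y M le_rfl hYF (by omega) heY hM hMc.symm
      · omega
  have hrle : SS.rmax (SS.lc e F) ≤ SS.rmax F - 1 := Finset.sup_le hub
  have hrge : SS.rmax F - 1 ≤ SS.rmax (SS.lc e F) := by
    have := Finset.le_sup (f := Finset.card) hB0lc
    change _ ≤ SS.rmax _ at this
    omega
  constructor
  · omega
  · refine ⟨B0, Finset.mem_filter.mpr ⟨hB0lc, by omega⟩, heB0⟩
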